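/- The number of vacillating tableaux of empty shape and length 2n equals the n-th Bell number B(n). -/

import Mathlib

/-- `ν` is obtained from `μ` by adding one square. -/
def AddOne (μ ν : YoungDiagram) : Prop := μ ≤ ν ∧ ν.card = μ.card + 1

namespace VacAux

open Finset

noncomputable instance : DecidableEq YoungDiagram := Classical.decEq _

lemma cell_lt_card {μ : YoungDiagram} {c : ℕ × ℕ} (h : c ∈ μ) :
    c.1 < μ.card ∧ c.2 < μ.card := by
  constructor
  · have hsub : (Finset.range (c.1 + 1)) ×ˢ {c.2} ⊆ μ.cells := by
      intro x hx
      simp only [Finset.mem_product, Finset.mem_range, Finset.mem_singleton] at hx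
      have : x ≤ c := ⟨Nat.lt_succ_iff.mp hx.1, le_of_eq hx.2⟩
      exact μ.isLowerSet this h
    have := Finset.card_le_card hsub
    simpa using this
  · have hsub : ({c.1} : Finset ℕ) ×ˢ (Finset.range (c.2 + 1)) ⊆ μ.cells := by
      intro x hx
      simp only [Finset.mem_product, Finset.mem_range, Finset.mem_singleton] at hx
      have : x ≤ c := ⟨le_of_eq hx.1, Nat.lt_succ_iff.mp hx.2⟩
      exact μ.isLowerSet this h
    have := Finset.card_le_card hsub
    simpa using this

lemma finite_card_le (N : ℕ) : {ν : YoungDiagram | ν.card ≤ N}.Finite := by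
  have h : Set.InjOn YoungDiagram.cells {ν : YoungDiagram | ν.card ≤ N} := by
    intro x _ y _ hxy
    exact YoungDiagram.ext_iff.mpr hxy
  apply Set.Finite.of_finite_image _ h
  apply Set.Finite.subset (((Finset.range N ×ˢ Finset.range N).powerset :
    Finset (Finset (ℕ × ℕ))).finite_toSet)
  rintro t ⟨ν, hν, rfl⟩
  simp only [Finset.coe_powerset, Set.mem_preimage, Set.mem_powerset_iff, Finset.coe_subset]
  intro c hc
  have := cell_lt_card (show c ∈ ν from hc)
  simp only [Finset.mem_product, Finset.mem_range]
  exact ⟨lt_of_lt_of_le this.1 hν, lt_of_lt_of_le this.2 hν⟩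

lemma covers_finite (μ : YoungDiagram) : {ν | AddOne μ ν}.Finite :=
  (finite_card_le (μ.card + 1)).subset (fun ν hν => le_of_eq hν.2)

lemma cocovers_finite (μ : YoungDiagram) : {ρ | AddOne ρ μ}.Finite :=
  (finite_card_le μ.card).subset (fun ρ hρ => by
    have h2 := hρ.2; simp only [Set.mem_setOf_eq]; omega)

/-- Finset of diagrams covering `μ`. -/
noncomputable def covF (μ : YoungDiagram) : Finset YoungDiagram :=
  (covers_finite μ).toFinset

/-- Finset of diagrams covered by `μ`. -/
noncomputable def cocovF (μ : YoungDiagram) : Finset YoungDiagram :=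
  (cocovers_finite μ).toFinset

@[simp] lemma mem_covF {μ ν : YoungDiagram} : ν ∈ covF μ ↔ AddOne μ ν := by
  simp [covF]

@[simp] lemma mem_cocovF {μ ρ : YoungDiagram} : ρ ∈ cocovF μ ↔ AddOne ρ μ := by
  simp [cocovF]




/-- extraction of added cell -/
lemma addOne_cells {μ ν : YoungDiagram} (h : AddOne μ ν) :
    ∃ c, c ∉ μ.cells ∧ ν.cells = insert c μ.cells := by
  obtain ⟨hle, hcard⟩ := h
  have hsub : μ.cells ⊆ ν.cells := hle
  have h1 : (ν.cells \ μ.cells).card = 1 := by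
    rw [Finset.card_sdiff_of_subset hsub]
    have : ν.card = ν.cells.card := rfl
    have : μ.card = μ.cells.card := rfl
    omega
  obtain ⟨c, hc⟩ := Finset.card_eq_one.mp h1
  refine ⟨c, ?_, ?_⟩
  · have : c ∈ ν.cells \ μ.cells := hc ▸ Finset.mem_singleton_self c
    exact (Finset.mem_sdiff.mp this).2
  · have := Finset.sdiff_union_of_subset hsub
    rw [hc] at this
    rw [← this, ← Finset.insert_eq]

def AddableRow (μ : YoungDiagram) (i : ℕ) : Prop := i = 0 ∨ μ.rowLen i < μ.rowLen (i - 1)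

instance (μ : YoungDiagram) (i : ℕ) : Decidable (AddableRow μ i) := by
  unfold AddableRow; infer_instance

noncomputable def AddRows (μ : YoungDiagram) : Finset ℕ :=
  (range (μ.card + 1)).filter (AddableRow μ)

noncomputable def RemRows (μ : YoungDiagram) : Finset ℕ :=
  (range (μ.card + 1)).filter (fun i => μ.rowLen (i + 1) < μ.rowLen i)

lemma rowPos_lt_card {μ : YoungDiagram} {i : ℕ} (h : 0 < μ.rowLen i) : i < μ.card := by
  have : (i, 0) ∈ μ := by rw [YoungDiagram.mem_iff_lt_rowLen]; omega
  exact (cell_lt_card this).1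

lemma rows_card (μ : YoungDiagram) : (AddRows μ).card = (RemRows μ).card + 1 := by
  have himg : AddRows μ = insert 0 ((RemRows μ).image Nat.succ) := by
    ext j
    simp only [AddRows, RemRows, Finset.mem_insert, Finset.mem_image, Finset.mem_filter,
      Finset.mem_range, AddableRow]
    cases j with
    | zero => simp
    | succ i =>
      simp only [Nat.succ_ne_zero, false_or, Nat.add_sub_cancel, Nat.succ.injEq]
      constructor
      · rintro ⟨hj, hlt⟩
        exact ⟨i, ⟨by omega, hlt⟩, rfl⟩
      · rintro ⟨i', ⟨hi', hlt⟩, rfl⟩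
        have : 0 < μ.rowLen i' := by omega
        have := rowPos_lt_card this
        exact ⟨by omega, hlt⟩
  rw [himg, Finset.card_insert_of_notMem (by simp), Finset.card_image_of_injective _
    Nat.succ_injective]

/-- the diagram obtained by adding a cell at the end of row `i` -/
def addCell (μ : YoungDiagram) (i : ℕ) (h : AddableRow μ i) : YoungDiagram :=
  ⟨insert (i, μ.rowLen i) μ.cells, by
    intro b a hba hb
    simp only [Finset.coe_insert, Set.mem_insert_iff, Finset.mem_coe, YoungDiagram.mem_cells]
      at hb ⊢
    rcases hb with hb | hb
    · by_cases hab : a = (i, μ.rowLen i)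
      · exact Or.inl hab
      · right
        subst hb
        obtain ⟨h1, h2⟩ := hba
        rw [YoungDiagram.mem_iff_lt_rowLen]
        rcases Nat.lt_or_ge a.1 i with hlt | hge
        · -- a.1 < i, so i ≠ 0
          rcases h with rfl | h
          · omega
          · have : μ.rowLen (i - 1) ≤ μ.rowLen a.1 := μ.rowLen_anti _ _ (by omega)
            omega
        · have hai : a.1 = i := le_antisymm h1 hge
          have : a.2 < μ.rowLen i := by
            rcases Nat.lt_or_ge a.2 (μ.rowLen i) with h' | h'
            · exact h'
            · exfalso; exact hab (Prod.ext hai (le_antisymm h2 h'))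
          rw [hai]; exact this
    · exact Or.inr (μ.isLowerSet hba hb)⟩

lemma addCell_addOne (μ : YoungDiagram) (i : ℕ) (h : AddableRow μ i) :
    AddOne μ (addCell μ i h) := by
  constructor
  · intro c hc; exact Finset.mem_insert_of_mem hc
  · show (insert (i, μ.rowLen i) μ.cells).card = _
    rw [Finset.card_insert_of_notMem (by
      rw [YoungDiagram.mem_cells, YoungDiagram.mem_iff_lt_rowLen]; omega)]

lemma card_covF (μ : YoungDiagram) : (covF μ).card = (AddRows μ).card := by
  symm
  apply Finset.card_bij (fun i hi => addCell μ i (Finset.mem_filter.mp hi).2)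
  · intro i hi
    rw [mem_covF]
    exact addCell_addOne μ i _
  · intro a1 h1 a2 h2 heq
    have hc : (a1, μ.rowLen a1) ∈ (addCell μ a2 (Finset.mem_filter.mp h2).2).cells := by
      rw [← heq]; exact Finset.mem_insert_self _ _
    rcases Finset.mem_insert.mp hc with h | h
    · exact congrArg Prod.fst h
    · exfalso
      rw [YoungDiagram.mem_cells, YoungDiagram.mem_iff_lt_rowLen] at h
      omega
  · intro ν hν
    rw [mem_covF] at hν
    obtain ⟨c, hcnot, hcells⟩ := addOne_cells hν
    obtain ⟨i, j⟩ := c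
    -- j = μ.rowLen i
    have hjge : μ.rowLen i ≤ j := by
      by_contra h
      exact hcnot (by rw [YoungDiagram.mem_cells, YoungDiagram.mem_iff_lt_rowLen]; omega)
    have hjle : j ≤ μ.rowLen i := by
      by_contra h
      have hmem : (i, μ.rowLen i) ∈ ν.cells := by
        apply ν.isLowerSet (b := (i, μ.rowLen i)) (a := (i,j)) ⟨le_refl i, by omega⟩
        rw [hcells]; exact Finset.mem_insert_self _ _
      rw [hcells] at hmem
      rcases Finset.mem_insert.mp hmem with h' | h'
      · have := congrArg Prod.snd h'; simp at this; omega
      · rw [YoungDiagram.mem_cells, YoungDiagram.mem_iff_lt_rowLen] at h'; omega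
    have hj : j = μ.rowLen i := le_antisymm hjle hjge
    have haddable : AddableRow μ i := by
      rcases Nat.eq_zero_or_pos i with rfl | hipos
      · exact Or.inl rfl
      · right
        have hmem : (i - 1, j) ∈ ν.cells := by
          apply ν.isLowerSet (b := (i - 1, j)) (a := (i, j)) ⟨by omega, le_refl j⟩
          rw [hcells]; exact Finset.mem_insert_self _ _
        rw [hcells] at hmem
        rcases Finset.mem_insert.mp hmem with h' | h'
        · have := congrArg Prod.fst h'; simp at this; omega
        · rw [YoungDiagram.mem_cells, YoungDiagram.mem_iff_lt_rowLen] at h'; omega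
    have hirange : i ∈ Finset.range (μ.card + 1) := by
      have hm : (i, j) ∈ ν := by
        rw [← YoungDiagram.mem_cells, hcells]; exact Finset.mem_insert_self _ _
      have h1 := (cell_lt_card hm).1
      have h2 := hν.2
      rw [Finset.mem_range]
      omega
    refine ⟨i, Finset.mem_filter.mpr ⟨hirange, haddable⟩, ?_⟩
    apply YoungDiagram.ext
    show insert (i, μ.rowLen i) μ.cells = ν.cells
    rw [hcells, hj]

/-- the diagram obtained by removing the last cell of row `i` -/
def remCell (μ : YoungDiagram) (i : ℕ) (h : μ.rowLen (i + 1) < μ.rowLen i) : YoungDiagram :=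
  ⟨μ.cells.erase (i, μ.rowLen i - 1), by
    intro p q hqp hp
    -- hqp : q ≤ p, hp : p ∈ erase, goal q ∈ erase
    simp only [Finset.coe_erase, Set.mem_diff, Finset.mem_coe, YoungDiagram.mem_cells,
      Set.mem_singleton_iff] at hp ⊢
    obtain ⟨hpmem, hpne⟩ := hp
    refine ⟨μ.isLowerSet hqp hpmem, ?_⟩
    rintro rfl
    -- now (i, rowLen i - 1) ≤ p, p ∈ μ, p ≠ (i, rowLen i - 1); contradiction
    obtain ⟨h1, h2⟩ := hqp
    simp only at h1 h2
    rw [YoungDiagram.mem_iff_lt_rowLen] at hpmem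
    have hp1 : p.1 = i := by
      by_contra hne
      have hge : i + 1 ≤ p.1 := by omega
      have := μ.rowLen_anti (i+1) p.1 hge
      omega
    rw [hp1] at hpmem
    exact hpne (Prod.ext hp1 (by omega))⟩

lemma remCell_addOne (μ : YoungDiagram) (i : ℕ) (h : μ.rowLen (i + 1) < μ.rowLen i) :
    AddOne (remCell μ i h) μ := by
  constructor
  · intro c hc; exact Finset.mem_of_mem_erase hc
  · show μ.cells.card = (μ.cells.erase (i, μ.rowLen i - 1)).card + 1
    rw [Finset.card_erase_of_mem (by
      rw [YoungDiagram.mem_cells, YoungDiagram.mem_iff_lt_rowLen]; omega)]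
    have hpos : 0 < μ.cells.card := by
      rw [Finset.card_pos]
      exact ⟨(i, μ.rowLen i - 1), by rw [YoungDiagram.mem_cells, YoungDiagram.mem_iff_lt_rowLen]; omega⟩
    omega

lemma card_cocovF (μ : YoungDiagram) : (cocovF μ).card = (RemRows μ).card := by
  symm
  apply Finset.card_bij (fun i hi => remCell μ i (Finset.mem_filter.mp hi).2)
  · intro i hi
    rw [mem_cocovF]
    exact remCell_addOne μ i _
  · intro a1 h1 a2 h2 heq
    have hm1 : μ.rowLen (a1 + 1) < μ.rowLen a1 := (Finset.mem_filter.mp h1).2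
    have hm2 : μ.rowLen (a2 + 1) < μ.rowLen a2 := (Finset.mem_filter.mp h2).2
    by_contra hne
    have hc : (a1, μ.rowLen a1 - 1) ∈ (remCell μ a2 hm2).cells := by
      show _ ∈ μ.cells.erase _
      apply Finset.mem_erase.mpr
      constructor
      · intro hcontra
        exact hne (congrArg Prod.fst hcontra)
      · rw [YoungDiagram.mem_cells, YoungDiagram.mem_iff_lt_rowLen]; omega
    rw [← heq] at hc
    have := Finset.notMem_erase (a1, μ.rowLen a1 - 1) μ.cells
    exact this hc
  · intro ρ hρ
    rw [mem_cocovF] at hρ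
    obtain ⟨c, hcnot, hcells⟩ := addOne_cells hρ
    obtain ⟨i, j⟩ := c
    have hcmem : (i, j) ∈ μ := by
      rw [← YoungDiagram.mem_cells, hcells]; exact Finset.mem_insert_self _ _
    have hjlt : j < μ.rowLen i := by rwa [YoungDiagram.mem_iff_lt_rowLen] at hcmem
    -- j = rowLen i - 1
    have hj : j = μ.rowLen i - 1 := by
      by_contra hne
      have hmem : (i, j + 1) ∈ μ.cells := by
        rw [YoungDiagram.mem_cells, YoungDiagram.mem_iff_lt_rowLen]; omega
      rw [hcells] at hmem
      rcases Finset.mem_insert.mp hmem with h' | h'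
      · have := congrArg Prod.snd h'; simp at this
      · -- (i, j+1) ∈ ρ but (i,j) ∉ ρ: contradiction with lower set
        apply hcnot
        rw [YoungDiagram.mem_cells] at h' ⊢
        exact ρ.isLowerSet (show ((i:ℕ), j) ≤ (i, j+1) from ⟨le_refl _, by omega⟩) h'
    have hrl : μ.rowLen (i + 1) < μ.rowLen i := by
      by_contra hge
      push_neg at hge
      have hmem : (i + 1, j) ∈ μ.cells := by
        rw [YoungDiagram.mem_cells, YoungDiagram.mem_iff_lt_rowLen]; omega
      rw [hcells] at hmem
      rcases Finset.mem_insert.mp hmem with h' | h'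
      · have := congrArg Prod.fst h'; simp at this
      · apply hcnot
        rw [YoungDiagram.mem_cells] at h' ⊢
        exact ρ.isLowerSet (show ((i:ℕ), j) ≤ (i+1, j) from ⟨by omega, le_refl _⟩) h'
    have hirange : i ∈ Finset.range (μ.card + 1) := by
      rw [Finset.mem_range]
      have := (cell_lt_card hcmem).1
      omega
    refine ⟨i, Finset.mem_filter.mpr ⟨hirange, hrl⟩, ?_⟩
    apply YoungDiagram.ext
    show μ.cells.erase (i, μ.rowLen i - 1) = ρ.cells
    rw [hcells, ← hj, Finset.erase_insert hcnot]

lemma corner (μ : YoungDiagram) : (covF μ).card = (cocovF μ).card + 1 := by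
  rw [card_covF, card_cocovF, rows_card]


lemma yd_eq_of_le_of_card_le {μ ν : YoungDiagram} (h : μ ≤ ν) (hc : ν.card ≤ μ.card) :
    μ = ν :=
  YoungDiagram.ext (Finset.eq_of_subset_of_card_le h hc)

lemma card_lt_of_lt {μ ν : YoungDiagram} (hle : μ ≤ ν) (hne : μ ≠ ν) : μ.card < ν.card := by
  apply Finset.card_lt_card
  rw [Finset.ssubset_iff_subset_ne]
  exact ⟨hle, fun h => hne (YoungDiagram.ext h)⟩

lemma card_sup_inf (μ σ : YoungDiagram) :
    (μ ⊔ σ).card + (μ ⊓ σ).card = μ.card + σ.card := by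
  show ((μ ⊔ σ).cells).card + ((μ ⊓ σ).cells).card = _
  rw [YoungDiagram.cells_sup, YoungDiagram.cells_inf]
  exact Finset.card_union_add_card_inter _ _

lemma updown {μ σ ρ : YoungDiagram} (h1 : AddOne μ ρ) (h2 : AddOne σ ρ) (hne : σ ≠ μ) :
    μ ⊔ σ = ρ ∧ AddOne (μ ⊓ σ) μ ∧ AddOne (μ ⊓ σ) σ := by
  have hcσμ : σ.card = μ.card := by have := h1.2; have := h2.2; omega
  have hsup_le : μ ⊔ σ ≤ ρ := sup_le h1.1 h2.1
  have hμne : μ ≠ μ ⊔ σ := by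
    intro h
    have hσμ : σ ≤ μ := h ▸ le_sup_right
    exact hne (yd_eq_of_le_of_card_le hσμ (le_of_eq hcσμ.symm))
  have hlt : μ.card < (μ ⊔ σ).card := card_lt_of_lt le_sup_left hμne
  have hle : (μ ⊔ σ).card ≤ ρ.card := Finset.card_le_card hsup_le
  have hsup : μ ⊔ σ = ρ := yd_eq_of_le_of_card_le hsup_le (by have := h1.2; omega)
  have hcsup : (μ ⊔ σ).card = μ.card + 1 := by rw [hsup]; exact h1.2 ▸ rfl
  have hcinf : μ.card = (μ ⊓ σ).card + 1 := by
    have := card_sup_inf μ σ; omega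
  exact ⟨hsup, ⟨inf_le_left, hcinf⟩, ⟨inf_le_right, by omega⟩⟩

lemma downup {μ σ ρ : YoungDiagram} (h1 : AddOne ρ μ) (h2 : AddOne ρ σ) (hne : σ ≠ μ) :
    μ ⊓ σ = ρ ∧ AddOne μ (μ ⊔ σ) ∧ AddOne σ (μ ⊔ σ) := by
  have hcσμ : σ.card = μ.card := by have := h1.2; have := h2.2; omega
  have hρ_le : ρ ≤ μ ⊓ σ := le_inf h1.1 h2.1
  have hμne : μ ⊓ σ ≠ μ := by
    intro h
    have hμσ : μ ≤ σ := h ▸ inf_le_right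
    exact hne (yd_eq_of_le_of_card_le hμσ (le_of_eq hcσμ)).symm
  have hlt : (μ ⊓ σ).card < μ.card := card_lt_of_lt inf_le_left hμne
  have hge : ρ.card ≤ (μ ⊓ σ).card := Finset.card_le_card hρ_le
  have hinf : μ ⊓ σ = ρ := (yd_eq_of_le_of_card_le hρ_le (by have := h1.2; omega)).symm
  have hcinf : (μ ⊓ σ).card + 1 = μ.card := by rw [hinf]; have := h1.2; omega
  have hcsup : (μ ⊔ σ).card = μ.card + 1 := by
    have := card_sup_inf μ σ
    have h1c := h1.2
    rw [hinf] at this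
    omega
  exact ⟨hinf, ⟨le_sup_left, hcsup⟩, ⟨le_sup_right, by omega⟩⟩

lemma comm_sum (f : YoungDiagram → ℕ) (μ : YoungDiagram) :
    ∑ ρ ∈ covF μ, ∑ σ ∈ cocovF ρ, f σ
      = (∑ ρ ∈ cocovF μ, ∑ σ ∈ covF ρ, f σ) + f μ := by
  have hL : ∑ ρ ∈ covF μ, ∑ σ ∈ cocovF ρ, f σ
      = (covF μ).card * f μ + ∑ ρ ∈ covF μ, ∑ σ ∈ (cocovF ρ).erase μ, f σ := by
    have : ∀ ρ ∈ covF μ, ∑ σ ∈ cocovF ρ, f σ = f μ + ∑ σ ∈ (cocovF ρ).erase μ, f σ := by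
      intro ρ hρ
      have hμmem : μ ∈ cocovF ρ := by rw [mem_cocovF]; exact (mem_covF.mp hρ)
      exact (Finset.add_sum_erase _ f hμmem).symm
    rw [Finset.sum_congr rfl this, Finset.sum_add_distrib, Finset.sum_const, smul_eq_mul]
  have hR : ∑ ρ ∈ cocovF μ, ∑ σ ∈ covF ρ, f σ
      = (cocovF μ).card * f μ + ∑ ρ ∈ cocovF μ, ∑ σ ∈ (covF ρ).erase μ, f σ := by
    have : ∀ ρ ∈ cocovF μ, ∑ σ ∈ covF ρ, f σ = f μ + ∑ σ ∈ (covF ρ).erase μ, f σ := by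
      intro ρ hρ
      have hμmem : μ ∈ covF ρ := by rw [mem_covF]; exact (mem_cocovF.mp hρ)
      exact (Finset.add_sum_erase _ f hμmem).symm
    rw [Finset.sum_congr rfl this, Finset.sum_add_distrib, Finset.sum_const, smul_eq_mul]
  have hS : ∑ ρ ∈ covF μ, ∑ σ ∈ (cocovF ρ).erase μ, f σ
      = ∑ ρ ∈ cocovF μ, ∑ σ ∈ (covF ρ).erase μ, f σ := by
    rw [Finset.sum_sigma', Finset.sum_sigma']
    apply Finset.sum_nbij' (i := fun p => (⟨μ ⊓ p.2, p.2⟩ : Σ _ : YoungDiagram, YoungDiagram))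
      (j := fun p => (⟨μ ⊔ p.2, p.2⟩ : Σ _ : YoungDiagram, YoungDiagram))
    · rintro ⟨ρ, σ⟩ hp
      rw [Finset.mem_sigma, mem_covF] at hp
      obtain ⟨h1, h2⟩ := hp
      rw [Finset.mem_erase, mem_cocovF] at h2
      obtain ⟨hne, h2⟩ := h2
      obtain ⟨-, hinfμ, hinfσ⟩ := updown h1 h2 hne
      rw [Finset.mem_sigma, mem_cocovF]
      exact ⟨hinfμ, Finset.mem_erase.mpr ⟨hne, mem_covF.mpr hinfσ⟩⟩
    · rintro ⟨ρ, σ⟩ hp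
      rw [Finset.mem_sigma, mem_cocovF] at hp
      obtain ⟨h1, h2⟩ := hp
      rw [Finset.mem_erase, mem_covF] at h2
      obtain ⟨hne, h2⟩ := h2
      obtain ⟨-, hsupμ, hsupσ⟩ := downup h1 h2 hne
      rw [Finset.mem_sigma, mem_covF]
      exact ⟨hsupμ, Finset.mem_erase.mpr ⟨hne, mem_cocovF.mpr hsupσ⟩⟩
    · rintro ⟨ρ, σ⟩ hp
      rw [Finset.mem_sigma, mem_covF] at hp
      obtain ⟨h1, h2⟩ := hp
      rw [Finset.mem_erase, mem_cocovF] at h2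
      obtain ⟨hne, h2⟩ := h2
      obtain ⟨hsup, -, -⟩ := updown h1 h2 hne
      simp only [Sigma.mk.inj_iff, heq_eq_eq, and_true]
      exact hsup
    · rintro ⟨ρ, σ⟩ hp
      rw [Finset.mem_sigma, mem_cocovF] at hp
      obtain ⟨h1, h2⟩ := hp
      rw [Finset.mem_erase, mem_covF] at h2
      obtain ⟨hne, h2⟩ := h2
      obtain ⟨hinf, -, -⟩ := downup h1 h2 hne
      simp only [Sigma.mk.inj_iff, heq_eq_eq, and_true]
      exact hinf
    · rintro ⟨ρ, σ⟩ _
      rfl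
  rw [hL, hR, hS, corner]
  ring

/-- spread mass from covers (delete half-step contribution) -/
noncomputable def Dop (f : YoungDiagram → ℕ) (μ : YoungDiagram) : ℕ := ∑ ρ ∈ covF μ, f ρ

/-- spread mass from cocovers (add half-step contribution) -/
noncomputable def Uop (f : YoungDiagram → ℕ) (μ : YoungDiagram) : ℕ := ∑ ρ ∈ cocovF μ, f ρ

/-- number of saturated chains from `⊥` of length `k` ending at `μ` -/
noncomputable def w : ℕ → YoungDiagram → ℕ
  | 0 => fun μ => if μ = ⊥ then 1 else 0
  | (k+1) => Uop (w k)

lemma comm_op (f : YoungDiagram → ℕ) (μ : YoungDiagram) :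
    Dop (Uop f) μ = Uop (Dop f) μ + f μ := comm_sum f μ

lemma bot_card : (⊥ : YoungDiagram).card = 0 := rfl

lemma Dop_w0 (μ : YoungDiagram) : Dop (w 0) μ = 0 := by
  apply Finset.sum_eq_zero
  intro ρ hρ
  have h := mem_covF.mp hρ
  have : ρ ≠ ⊥ := by
    intro hbot
    subst hbot
    have h2 := h.2
    rw [bot_card] at h2
    omega
  simp [w, this]

lemma Uop_zero (μ : YoungDiagram) (f : YoungDiagram → ℕ) (h : ∀ ν, f ν = 0) : Uop f μ = 0 :=
  Finset.sum_eq_zero (fun ρ _ => h ρ)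

lemma Uop_mul (c : ℕ) (f : YoungDiagram → ℕ) (μ : YoungDiagram) :
    Uop (fun ν => c * f ν) μ = c * Uop f μ := by
  unfold Uop; rw [Finset.mul_sum]

lemma Dop_w (k : ℕ) (μ : YoungDiagram) : Dop (w (k+1)) μ = (k+1) * w k μ := by
  induction k generalizing μ with
  | zero =>
    show Dop (Uop (w 0)) μ = 1 * w 0 μ
    rw [comm_op]
    have : Uop (Dop (w 0)) μ = 0 := by
      apply Finset.sum_eq_zero
      intro ρ _
      exact Dop_w0 ρ
    rw [this]
    ring
  | succ k ih =>
    show Dop (Uop (w (k+1))) μ = _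
    rw [comm_op]
    have h1 : Uop (Dop (w (k+1))) μ = (k+1) * Uop (w k) μ := by
      rw [← Uop_mul]
      exact Finset.sum_congr rfl (fun ρ _ => ih ρ)
    rw [h1]
    show (k+1) * w (k+1) μ + w (k+1) μ = (k+2) * w (k+1) μ
    ring

lemma w_eq_zero_of_card_ne (k : ℕ) (μ : YoungDiagram) (h : μ.card ≠ k) : w k μ = 0 := by
  induction k generalizing μ with
  | zero =>
    have : μ ≠ ⊥ := by
      intro hbot
      rw [hbot, bot_card] at h
      exact h rfl
    simp [w, this]
  | succ k ih =>
    show Uop (w k) μ = 0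
    apply Finset.sum_eq_zero
    intro ρ hρ
    have hρμ := mem_cocovF.mp hρ
    apply ih
    have := hρμ.2
    omega

lemma w0_bot : w 0 ⊥ = 1 := by simp [w]

/-- the step relation: from `a` at time `i` to `b` at time `i+1` -/
def StepRel (m : ℕ) (a b : YoungDiagram) : Prop :=
  if Even m then (b = a ∨ AddOne b a) else (b = a ∨ AddOne a b)

/-- set of possible previous states -/
noncomputable def stepF (m : ℕ) (μ : YoungDiagram) : Finset YoungDiagram :=
  if Even m then insert μ (covF μ) else insert μ (cocovF μ)

lemma mem_stepF {m : ℕ} {μ ρ : YoungDiagram} : ρ ∈ stepF m μ ↔ StepRel m ρ μ := by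
  unfold stepF StepRel
  by_cases h : Even m <;> simp [h, eq_comm]

/-- prefix predicate: a walk of length `m` from `⊥` to `μ`, constant μ afterwards -/
def Pref (m : ℕ) (μ : YoungDiagram) (V : ℕ → YoungDiagram) : Prop :=
  V 0 = ⊥ ∧ (∀ k, m ≤ k → V k = μ) ∧ ∀ i < m, StepRel i (V i) (V (i + 1))

/-- the walk count -/
noncomputable def pc (m : ℕ) (μ : YoungDiagram) : ℕ := Nat.card {V // Pref m μ V}

lemma pref_zero_bot : Pref 0 ⊥ (fun _ => ⊥) :=
  ⟨rfl, fun _ _ => rfl, fun i hi => absurd hi (by omega)⟩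

lemma pc_zero (μ : YoungDiagram) : pc 0 μ = if μ = ⊥ then 1 else 0 := by
  unfold pc
  split
  · next h =>
    subst h
    have : ∀ V : {V // Pref 0 ⊥ V}, V = ⟨fun _ => ⊥, pref_zero_bot⟩ := by
      rintro ⟨V, hV⟩
      apply Subtype.ext
      funext k
      exact hV.2.1 k (Nat.zero_le k)
    rw [Nat.card_eq_one_iff_unique]
    exact ⟨⟨fun a b => (this a).trans (this b).symm⟩, ⟨⟨_, pref_zero_bot⟩⟩⟩
  · next h =>
    rw [Nat.card_eq_zero]
    left
    constructor
    rintro ⟨V, hV⟩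
    exact h ((hV.2.1 0 le_rfl).symm.trans hV.1)

/-- fiber equivalence for the last step -/
def fiberEquiv (m : ℕ) (μ ρ : YoungDiagram) (hρ : StepRel m ρ μ) :
    {V : {V // Pref (m+1) μ V} // V.1 m = ρ} ≃ {W // Pref m ρ W} where
  toFun V := ⟨fun k => V.1.1 (min k m), by
    obtain ⟨⟨V, hV⟩, hVm⟩ := V
    refine ⟨by simpa using hV.1, ?_, ?_⟩
    · intro k hk
      simpa [Nat.min_eq_right hk] using hVm
    · intro i hi
      have h1 : min i m = i := Nat.min_eq_left (by omega)
      have h2 : min (i+1) m = i + 1 := Nat.min_eq_left (by omega)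
      show StepRel i (V (min i m)) (V (min (i+1) m))
      rw [h1, h2]
      exact hV.2.2 i (by omega)⟩
  invFun W := ⟨⟨fun k => if m + 1 ≤ k then μ else W.1 k, by
    obtain ⟨W, hW⟩ := W
    refine ⟨?_, ?_, ?_⟩
    · show (if m + 1 ≤ 0 then μ else W 0) = ⊥
      rw [if_neg (by omega)]
      exact hW.1
    · intro k hk
      show (if m + 1 ≤ k then μ else W k) = μ
      rw [if_pos hk]
    · intro i hi
      by_cases him : i < m
      · show StepRel i (if m + 1 ≤ i then μ else W i) (if m + 1 ≤ i + 1 then μ else W (i+1))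
        rw [if_neg (by omega), if_neg (by omega)]
        exact hW.2.2 i him
      · have : i = m := by omega
        subst this
        show StepRel i (if i + 1 ≤ i then μ else W i) (if i + 1 ≤ i + 1 then μ else W (i+1))
        rw [if_neg (by omega), if_pos le_rfl, hW.2.1 i le_rfl]
        exact hρ⟩, by
    show (if m + 1 ≤ m then μ else W.1 m) = ρ
    rw [if_neg (by omega)]
    exact W.2.2.1 m le_rfl⟩
  left_inv := by
    rintro ⟨⟨V, hV⟩, hVm⟩
    apply Subtype.ext
    apply Subtype.ext
    funext k
    show (if m + 1 ≤ k then μ else V (min k m)) = V k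
    by_cases hk : m + 1 ≤ k
    · rw [if_pos hk]
      exact (hV.2.1 k (by omega)).symm
    · rw [if_neg hk, Nat.min_eq_left (by omega)]
  right_inv := by
    rintro ⟨W, hW⟩
    apply Subtype.ext
    funext k
    show (if m + 1 ≤ min k m then μ else W (min k m)) = W k
    rw [if_neg (by omega)]
    by_cases hk : k ≤ m
    · rw [Nat.min_eq_left hk]
    · rw [Nat.min_eq_right (by omega), hW.2.1 m le_rfl, (hW.2.1 k (by omega)).symm]

noncomputable def stepEquiv (m : ℕ) (μ : YoungDiagram) :
    {V // Pref (m+1) μ V} ≃ Σ ρ : stepF m μ, {W // Pref m ρ.1 W} := by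
  have hmem : ∀ V : {V // Pref (m+1) μ V}, V.1 m ∈ stepF m μ := by
    intro V
    rw [mem_stepF]
    have h := V.2.2.2 m (by omega)
    rwa [V.2.2.1 (m+1) le_rfl] at h
  exact (Equiv.sigmaFiberEquiv (fun V : {V // Pref (m+1) μ V} =>
      (⟨V.1 m, hmem V⟩ : stepF m μ))).symm.trans
    (Equiv.sigmaCongrRight fun ρ =>
      ((Equiv.subtypeEquivRight (fun V => by
          rw [Subtype.ext_iff])).trans
        (fiberEquiv m μ ρ.1 (mem_stepF.mp ρ.2))))

lemma pref_finite : ∀ (m : ℕ) (μ : YoungDiagram), Finite {V // Pref m μ V} := by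
  intro m
  induction m with
  | zero =>
    intro μ
    have : Subsingleton {V // Pref 0 μ V} := by
      constructor
      rintro ⟨V, hV⟩ ⟨W, hW⟩
      apply Subtype.ext
      funext k
      show V k = W k
      rw [hV.2.1 k (Nat.zero_le k), hW.2.1 k (Nat.zero_le k)]
    infer_instance
  | succ m ih =>
    intro μ
    have : ∀ ρ : stepF m μ, Finite {W // Pref m ρ.1 W} := fun ρ => ih ρ.1
    exact Finite.of_equiv _ (stepEquiv m μ).symm

lemma card_sigma_finset {α : Type*} (s : Finset α) (β : α → Type*) [∀ a, Finite (β a)] :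
    Nat.card (Σ ρ : s, β ρ.1) = ∑ ρ ∈ s, Nat.card (β ρ) := by
  classical
  have hft : ∀ a : α, Fintype (β a) := fun a => Fintype.ofFinite _
  rw [Nat.card_eq_fintype_card, Fintype.card_sigma,
    ← Finset.sum_coe_sort s (fun a => Nat.card (β a))]
  apply Finset.sum_congr rfl
  intro ρ _
  rw [Nat.card_eq_fintype_card]

lemma pc_succ (m : ℕ) (μ : YoungDiagram) :
    pc (m+1) μ = ∑ ρ ∈ stepF m μ, pc m ρ := by
  unfold pc
  rw [Nat.card_congr (stepEquiv m μ)]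
  have : ∀ ρ : YoungDiagram, Finite {W // Pref m ρ W} := pref_finite m
  exact card_sigma_finset (stepF m μ) (fun ρ => {W // Pref m ρ W})

lemma not_mem_covF (μ : YoungDiagram) : μ ∉ covF μ := by
  rw [mem_covF]
  intro h
  have := h.2
  omega

lemma not_mem_cocovF (μ : YoungDiagram) : μ ∉ cocovF μ := by
  rw [mem_cocovF]
  intro h
  have := h.2
  omega

lemma pc_succ_even {m : ℕ} (hm : Even m) (μ : YoungDiagram) :
    pc (m+1) μ = pc m μ + Dop (pc m) μ := by
  rw [pc_succ]
  unfold stepF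
  rw [if_pos hm, Finset.sum_insert (not_mem_covF μ)]
  rfl

lemma pc_succ_odd {m : ℕ} (hm : ¬ Even m) (μ : YoungDiagram) :
    pc (m+1) μ = pc m μ + Uop (pc m) μ := by
  rw [pc_succ]
  unfold stepF
  rw [if_neg hm, Finset.sum_insert (not_mem_cocovF μ)]
  rfl

lemma card_eq_zero_iff_bot (μ : YoungDiagram) : μ.card = 0 ↔ μ = ⊥ := by
  constructor
  · intro h
    apply YoungDiagram.ext
    rw [Finset.card_eq_zero.mp h]
    rfl
  · rintro rfl
    rfl

lemma cocovF_bot_card {μ : YoungDiagram} (h : μ.card = 0) : cocovF μ = ∅ := by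
  ext ρ
  simp only [mem_cocovF, Finset.notMem_empty, iff_false]
  intro hρ
  have := hρ.2
  omega

/-- the Bell triangle -/
def tri : ℕ → ℕ → ℕ
  | 0, k => if k = 0 then 1 else 0
  | (n+1), k => (k+1) * tri n k + (k+1) * tri n (k+1) + (if k = 0 then 0 else tri n (k-1))

lemma tri_succ (n k : ℕ) : tri (n+1) k
    = (k+1) * tri n k + (k+1) * tri n (k+1) + (if k = 0 then 0 else tri n (k-1)) := rfl

lemma pc_even_eq (n : ℕ) : ∀ μ : YoungDiagram, pc (2*n) μ = tri n μ.card * w μ.card μ := by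
  induction n with
  | zero =>
    intro μ
    show pc 0 μ = _
    rw [pc_zero]
    by_cases h : μ = ⊥
    · subst h
      rw [if_pos rfl, bot_card]
      simp [tri, w]
    · rw [if_neg h]
      have hc : μ.card ≠ 0 := fun hc => h ((card_eq_zero_iff_bot μ).mp hc)
      show 0 = tri 0 μ.card * w μ.card μ
      unfold tri
      rw [if_neg hc]
      ring
  | succ n ih =>
    have hmid : ∀ ν : YoungDiagram,
        pc (2*n+1) ν = (tri n ν.card + (ν.card+1) * tri n (ν.card+1)) * w ν.card ν := by
      intro ν
      rw [pc_succ_even (by exact even_two_mul n), ih ν]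
      have hD : Dop (pc (2*n)) ν = (ν.card + 1) * tri n (ν.card+1) * w ν.card ν := by
        unfold Dop
        have hcong : ∀ ρ ∈ covF ν, pc (2*n) ρ = tri n (ν.card+1) * w (ν.card+1) ρ := by
          intro ρ hρ
          rw [ih ρ, (mem_covF.mp hρ).2]
        rw [Finset.sum_congr rfl hcong, ← Finset.mul_sum]
        rw [show ∑ ρ ∈ covF ν, w (ν.card+1) ρ = Dop (w (ν.card + 1)) ν from rfl, Dop_w]
        ring
      rw [hD]
      ring
    intro μ
    have h2 : 2*(n+1) = (2*n+1)+1 := by ring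
    rw [h2, pc_succ_odd (by simp [Nat.even_add_one, parity_simps]), hmid μ]
    rcases Nat.eq_zero_or_pos μ.card with hK | hK
    · have hbot : μ = ⊥ := (card_eq_zero_iff_bot μ).mp hK
      have hU : Uop (pc (2*n+1)) μ = 0 := by
        unfold Uop
        rw [cocovF_bot_card hK, Finset.sum_empty]
      rw [hU, hK]
      show (tri n 0 + 1 * tri n 1) * w 0 μ + 0 = tri (n+1) 0 * w 0 μ
      rw [tri_succ]
      simp only [↓reduceIte]
      ring
    · obtain ⟨K, hK⟩ : ∃ K, μ.card = K + 1 := ⟨μ.card - 1, by omega⟩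
      have hU : Uop (pc (2*n+1)) μ
          = (tri n K + (K+1) * tri n (K+1)) * w (K+1) μ := by
        unfold Uop
        have hcong : ∀ ρ ∈ cocovF μ, pc (2*n+1) ρ
            = (tri n K + (K+1) * tri n (K+1)) * w K ρ := by
          intro ρ hρ
          have hρc : ρ.card = K := by
            have := (mem_cocovF.mp hρ).2
            omega
          rw [hmid ρ, hρc]
        rw [Finset.sum_congr rfl hcong, ← Finset.mul_sum]
        rw [show ∑ ρ ∈ cocovF μ, w K ρ = Uop (w K) μ from rfl]
        rfl
      rw [hU, hK]
      show (tri n (K+1) + (K+1+1) * tri n (K+1+1)) * w (K+1) μ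
          + (tri n K + (K+1) * tri n (K+1)) * w (K+1) μ = tri (n+1) (K+1) * w (K+1) μ
      rw [tri_succ, if_neg (by omega)]
      simp only [Nat.add_sub_cancel]
      ring

lemma pc_final (n : ℕ) : pc (2*n) ⊥ = tri n 0 := by
  rw [pc_even_eq n ⊥, bot_card, w0_bot]
  ring

lemma isVacTab_iff_pref (n : ℕ) (V : ℕ → YoungDiagram) :
    (V 0 = ⊥ ∧ V (2 * n) = ⊥ ∧ (∀ k, 2 * n ≤ k → V k = ⊥) ∧
      (∀ i < n, V (2 * i + 1) = V (2 * i) ∨ AddOne (V (2 * i + 1)) (V (2 * i))) ∧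
      (∀ i < n, V (2 * i + 2) = V (2 * i + 1) ∨ AddOne (V (2 * i + 1)) (V (2 * i + 2))))
    ↔ Pref (2 * n) ⊥ V := by
  constructor
  · rintro ⟨h0, h2n, htail, hdel, hadd⟩
    refine ⟨h0, htail, ?_⟩
    intro i hi
    rcases Nat.even_or_odd i with ⟨j, hj⟩ | ⟨j, hj⟩
    · subst hj
      unfold StepRel
      rw [if_pos ⟨j, rfl⟩]
      have := hdel j (by omega)
      rw [show j + j = 2 * j by ring]
      exact this
    · subst hj
      unfold StepRel
      rw [if_neg (by simp [Nat.even_add_one, parity_simps])]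
      have := hadd j (by omega)
      rw [show 2 * j + 1 + 1 = 2 * j + 2 from rfl]
      exact this
  · rintro ⟨h0, htail, hstep⟩
    refine ⟨h0, htail _ le_rfl, htail, ?_, ?_⟩
    · intro i hi
      have := hstep (2 * i) (by omega)
      unfold StepRel at this
      rwa [if_pos ⟨i, by ring⟩] at this
    · intro i hi
      have := hstep (2 * i + 1) (by omega)
      unfold StepRel at this
      rwa [if_neg (by simp [Nat.even_add_one, parity_simps])] at this

/-! ### The set partition side -/

section Bell

variable {a : ℕ} {s : Finset ℕ} (ha : a ∉ s)

/-- remove the element `a` from a partition of `insert a s` -/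
def delPart (π : Finpartition (insert a s)) : Finpartition s :=
  (π.avoid {a}).copy (by
    rw [Finset.sdiff_singleton_eq_erase, Finset.erase_insert ha])

include ha in
lemma not_mem_of_part {π : Finpartition s} {t : Finset ℕ} (ht : t ∈ π.parts) : a ∉ t :=
  fun h => ha (π.le ht h)

lemma mem_delPart (π : Finpartition (insert a s)) {t : Finset ℕ} :
    t ∈ (delPart ha π).parts ↔
      (t ∈ π.parts ∧ t ≠ π.part a) ∨ (π.part a ≠ {a} ∧ t = (π.part a).erase a) := by
  have hb : π.part a ∈ π.parts := π.part_mem.mpr (Finset.mem_insert_self a s)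
  have hab : a ∈ π.part a := π.mem_part (Finset.mem_insert_self a s)
  show t ∈ (π.avoid {a}).parts ↔ _
  rw [Finpartition.mem_avoid]
  constructor
  · rintro ⟨d, hd, hdle, rfl⟩
    by_cases hdb : d = π.part a
    · subst hdb
      right
      refine ⟨?_, ?_⟩
      · intro hcontra
        exact hdle (le_of_eq hcontra)
      · rw [Finset.sdiff_singleton_eq_erase]
    · left
      have had : a ∉ d := fun h => hdb (π.eq_of_mem_parts hd hb h hab)
      rw [Finset.sdiff_singleton_eq_erase, Finset.erase_eq_of_notMem had]
      exact ⟨hd, hdb⟩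
  · rintro (⟨ht, htb⟩ | ⟨hba, rfl⟩)
    · refine ⟨t, ht, ?_, ?_⟩
      · intro hle
        obtain ⟨x, hx⟩ := π.nonempty_of_mem_parts ht
        have : x = a := Finset.mem_singleton.mp (hle hx)
        subst this
        exact htb (π.eq_of_mem_parts ht hb hx hab)
      · rw [Finset.sdiff_singleton_eq_erase, Finset.erase_eq_of_notMem]
        intro h
        exact htb (π.eq_of_mem_parts ht hb h hab)
    · refine ⟨π.part a, hb, ?_, ?_⟩
      · intro hle
        apply hba
        exact Finset.Subset.antisymm hle (Finset.singleton_subset_iff.mpr hab)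
      · rw [Finset.sdiff_singleton_eq_erase]

/-- add `a` as a singleton block -/
def addSingle (π : Finpartition s) : Finpartition (insert a s) :=
  π.extend (b := {a}) (by simp)
    (Finset.disjoint_singleton_right.mpr ha)
    (by rw [Finset.sup_eq_union, Finset.union_comm, ← Finset.insert_eq])

lemma addSingle_parts (π : Finpartition s) :
    (addSingle ha π).parts = insert {a} π.parts := rfl

lemma part_addSingle (π : Finpartition s) : (addSingle ha π).part a = {a} :=
  Finpartition.part_eq_of_mem _ (by rw [addSingle_parts]; exact Finset.mem_insert_self _ _)
    (Finset.mem_singleton_self a)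

lemma avoid_parts_of_mem {π : Finpartition s} {t : Finset ℕ} (ht : t ∈ π.parts) :
    (π.avoid t).parts = π.parts.erase t := by
  ext c
  rw [Finpartition.mem_avoid, Finset.mem_erase]
  constructor
  · rintro ⟨d, hd, hdle, rfl⟩
    have hdt : d ≠ t := by
      intro h; subst h; exact hdle le_rfl
    have : Disjoint d t := π.disjoint hd ht hdt
    rw [Finset.sdiff_eq_self_of_disjoint this]
    exact ⟨hdt, hd⟩
  · rintro ⟨hct, hc⟩
    refine ⟨c, hc, ?_, ?_⟩
    · intro hle
      have hdisj : Disjoint c t := π.disjoint hc ht hct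
      have hcbot : c = ⊥ := hdisj.eq_bot_of_le hle
      exact π.bot_notMem (hcbot ▸ hc)
    · exact Finset.sdiff_eq_self_of_disjoint (π.disjoint hc ht hct)

/-- add `a` to the block `t` of a partition -/
def addTo (π : Finpartition s) (t : Finset ℕ) (ht : t ∈ π.parts) : Finpartition (insert a s) :=
  (π.avoid t).extend (b := insert a t) (by simp)
    (by
      rw [Finset.disjoint_insert_right]
      exact ⟨fun h => ha (Finset.mem_sdiff.mp h).1, Finset.sdiff_disjoint⟩)
    (by rw [Finset.sup_eq_union, Finset.union_insert, Finset.sdiff_union_of_subset (π.le ht)])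

lemma addTo_parts (π : Finpartition s) (t : Finset ℕ) (ht : t ∈ π.parts) :
    (addTo ha π t ht).parts = insert (insert a t) (π.parts.erase t) := by
  show insert (insert a t) (π.avoid t).parts = _
  rw [avoid_parts_of_mem ht]

lemma part_addTo (π : Finpartition s) (t : Finset ℕ) (ht : t ∈ π.parts) :
    (addTo ha π t ht).part a = insert a t :=
  Finpartition.part_eq_of_mem _
    (by rw [addTo_parts ha]; exact Finset.mem_insert_self _ _)
    (Finset.mem_insert_self a t)

include ha

lemma delPart_addSingle (π : Finpartition s) : delPart ha (addSingle ha π) = π := by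
  apply Finpartition.ext
  ext t
  rw [mem_delPart ha, part_addSingle ha, addSingle_parts ha]
  simp only [ne_eq, not_true_eq_false, false_and, or_false, Finset.mem_insert]
  constructor
  · rintro ⟨h | h, hne⟩
    · exact absurd h hne
    · exact h
  · intro h
    refine ⟨Or.inr h, ?_⟩
    intro hcontra
    subst hcontra
    exact not_mem_of_part ha h (Finset.mem_singleton_self a)

lemma addSingle_delPart (π : Finpartition (insert a s)) (h : π.part a = {a}) :
    addSingle ha (delPart ha π) = π := by
  apply Finpartition.ext
  ext t
  rw [addSingle_parts ha, Finset.mem_insert, mem_delPart ha, h]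
  simp only [ne_eq, not_true_eq_false, false_and, or_false]
  constructor
  · rintro (rfl | ⟨h1, _⟩)
    · rw [← h]; exact π.part_mem.mpr (Finset.mem_insert_self a s)
    · exact h1
  · intro ht
    by_cases hta : t = {a}
    · exact Or.inl hta
    · exact Or.inr ⟨ht, hta⟩

lemma part_ne_singleton_of_ne {π : Finpartition (insert a s)} (hne : π.part a ≠ {a}) :
    ((π.part a).erase a).Nonempty := by
  have hab : a ∈ π.part a := π.mem_part (Finset.mem_insert_self a s)
  rcases Finset.eq_empty_or_nonempty ((π.part a).erase a) with h | h
  · exfalso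
    apply hne
    apply Finset.Subset.antisymm
    · intro x hx
      by_cases hxa : x = a
      · rw [hxa]; exact Finset.mem_singleton_self a
      · exact absurd (Finset.mem_erase.mpr ⟨hxa, hx⟩) (h ▸ Finset.notMem_empty x)
    · exact Finset.singleton_subset_iff.mpr hab
  · exact h

lemma erase_not_mem_parts {π : Finpartition (insert a s)} (hne : π.part a ≠ {a}) :
    (π.part a).erase a ∉ π.parts := by
  intro hmem
  have hb : π.part a ∈ π.parts := π.part_mem.mpr (Finset.mem_insert_self a s)
  have hne2 : (π.part a).erase a ≠ π.part a := by
    intro h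
    have : a ∉ (π.part a).erase a := Finset.notMem_erase a _
    rw [h] at this
    exact this (π.mem_part (Finset.mem_insert_self a s))
  have hdisj := π.disjoint hmem hb hne2
  obtain ⟨x, hx⟩ := part_ne_singleton_of_ne ha hne
  exact (Finset.disjoint_left.mp hdisj) hx (Finset.mem_of_mem_erase hx)

lemma delPart_addTo (π : Finpartition s) (t : Finset ℕ) (ht : t ∈ π.parts) :
    delPart ha (addTo ha π t ht) = π := by
  have hat : a ∉ t := not_mem_of_part ha ht
  have htne : insert a t ≠ {a} := by
    obtain ⟨x, hx⟩ := π.nonempty_of_mem_parts ht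
    intro h
    have : x ∈ ({a} : Finset ℕ) := h ▸ Finset.mem_insert_of_mem hx
    rw [Finset.mem_singleton] at this
    exact hat (this ▸ hx)
  apply Finpartition.ext
  ext c
  rw [mem_delPart ha, part_addTo ha, addTo_parts ha, Finset.erase_insert hat]
  constructor
  · rintro (⟨hc, hcne⟩ | ⟨-, rfl⟩)
    · rcases Finset.mem_insert.mp hc with h | h
      · exact absurd h hcne
      · exact Finset.mem_of_mem_erase h
    · exact ht
  · intro hc
    by_cases hct : c = t
    · subst hct; exact Or.inr ⟨htne, rfl⟩
    · left
      refine ⟨Finset.mem_insert_of_mem (Finset.mem_erase.mpr ⟨hct, hc⟩), ?_⟩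
      intro h
      exact not_mem_of_part ha hc (h ▸ Finset.mem_insert_self a t)

lemma erase_mem_delPart {π : Finpartition (insert a s)} (hne : π.part a ≠ {a}) :
    (π.part a).erase a ∈ (delPart ha π).parts :=
  (mem_delPart ha π).mpr (Or.inr ⟨hne, rfl⟩)

lemma addTo_delPart (π : Finpartition (insert a s)) (hne : π.part a ≠ {a}) :
    addTo ha (delPart ha π) ((π.part a).erase a) (erase_mem_delPart ha hne) = π := by
  have hab : a ∈ π.part a := π.mem_part (Finset.mem_insert_self a s)
  have hb : π.part a ∈ π.parts := π.part_mem.mpr (Finset.mem_insert_self a s)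
  apply Finpartition.ext
  ext c
  rw [addTo_parts ha, Finset.insert_erase hab, Finset.mem_insert, Finset.mem_erase,
    mem_delPart ha]
  constructor
  · rintro (rfl | ⟨hcne, (⟨h1, -⟩ | ⟨-, h2⟩)⟩)
    · exact hb
    · exact h1
    · exact absurd h2 hcne
  · intro hc
    by_cases hcb : c = π.part a
    · exact Or.inl hcb
    · right
      have hcb' : c ≠ (π.part a).erase a := by
        intro h
        have hdisj := π.disjoint hc hb hcb
        obtain ⟨x, hx⟩ := part_ne_singleton_of_ne ha hne
        rw [← h] at hx
        exact (Finset.disjoint_left.mp hdisj) hx (Finset.mem_of_mem_erase (h ▸ hx))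
      exact ⟨hcb', Or.inl ⟨hc, hcb⟩⟩

end Bell

/-- a set partition with `k` marked blocks -/
structure MP (s : Finset ℕ) (k : ℕ) where
  pt : Finpartition s
  mks : Finset (Finset ℕ)
  sub : mks ⊆ pt.parts
  cd : mks.card = k

lemma MP.ext' {s : Finset ℕ} {k : ℕ} {x y : MP s k}
    (h1 : x.pt = y.pt) (h2 : x.mks = y.mks) : x = y := by
  cases x; cases y
  dsimp at h1 h2
  subst h1; subst h2
  rfl

instance finpartition_finite (s : Finset ℕ) : Finite (Finpartition s) := by
  apply Finite.of_injective (β := ↥(s.powerset.powerset))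
    (fun π => ⟨π.parts, Finset.mem_powerset.mpr (fun t ht =>
      Finset.mem_powerset.mpr (π.le ht))⟩)
  intro x y hxy
  apply Finpartition.ext
  simpa using congrArg Subtype.val hxy

instance MP.finite (s : Finset ℕ) (k : ℕ) : Finite (MP s k) := by
  apply Finite.of_injective (β := Finpartition s × ↥(s.powerset.powerset))
    (fun x => (x.pt, ⟨x.mks, Finset.mem_powerset.mpr (fun t ht =>
      Finset.mem_powerset.mpr (x.pt.le (x.sub ht)))⟩))
  intro x y hxy
  have h1 := congrArg Prod.fst hxy
  have h2 := congrArg (fun z : Finpartition s × ↥(s.powerset.powerset) => z.2.1) hxy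
  dsimp at h1 h2
  exact MP.ext' h1 h2

lemma MPP_ext {s : Finset ℕ} {k : ℕ} {x y : Σ z : MP s k, {c // c ∈ z.mks}}
    (h1 : x.1 = y.1) (h2 : x.2.1 = y.2.1) : x = y := by
  obtain ⟨x1, x2⟩ := x
  obtain ⟨y1, y2⟩ := y
  dsimp at h1
  subst h1
  dsimp at h2
  exact congrArg (Sigma.mk x1) (Subtype.ext h2)

lemma nat_card_sigma {ι : Type*} [Fintype ι] (β : ι → Type*) [∀ i, Finite (β i)] :
    Nat.card (Σ i, β i) = ∑ i, Nat.card (β i) := by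
  have : ∀ i, Fintype (β i) := fun i => Fintype.ofFinite _
  rw [Nat.card_eq_fintype_card, Fintype.card_sigma]
  exact Finset.sum_congr rfl fun i _ => (Nat.card_eq_fintype_card).symm

lemma card_MP_zero (s : Finset ℕ) : Nat.card (MP s 0) = Nat.card (Finpartition s) :=
  Nat.card_congr
    { toFun := fun x => x.pt
      invFun := fun π => ⟨π, ∅, Finset.empty_subset _, rfl⟩
      left_inv := fun x => MP.ext' rfl (Finset.card_eq_zero.mp x.cd).symm
      right_inv := fun π => rfl }

lemma card_MP_pointed (s : Finset ℕ) (k : ℕ) :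
    Nat.card (Σ x : MP s k, {c // c ∈ x.mks}) = k * Nat.card (MP s k) := by
  classical
  have hft : Fintype (MP s k) := Fintype.ofFinite _
  rw [nat_card_sigma]
  have hc : ∀ x : MP s k, Nat.card {c // c ∈ x.mks} = k := by
    intro x
    have : Nat.card {c // c ∈ x.mks} = x.mks.card := by
      rw [Nat.card_eq_fintype_card, Fintype.card_coe]
    rw [this, x.cd]
  rw [Finset.sum_congr rfl (fun x _ => hc x), Finset.sum_const, smul_eq_mul,
    Finset.card_univ, ← Nat.card_eq_fintype_card, mul_comm]

lemma nat_card_split {α : Type*} [Finite α] (p : α → Prop) :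
    Nat.card α = Nat.card {x // p x} + Nat.card {x // ¬ p x} := by
  classical
  rw [← Nat.card_sum]
  exact Nat.card_congr (Equiv.sumCompl p).symm

lemma nat_card_split4 {α : Type*} [Finite α] (p q : α → Prop) :
    Nat.card α = Nat.card {x // p x ∧ q x} + Nat.card {x // p x ∧ ¬ q x}
      + (Nat.card {x // ¬ p x ∧ q x} + Nat.card {x // ¬ p x ∧ ¬ q x}) := by
  classical
  rw [nat_card_split p]
  congr 1
  · rw [nat_card_split (fun y : {x // p x} => q y.1)]
    congr 1
    · exact Nat.card_congr (Equiv.subtypeSubtypeEquivSubtypeInter p q)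
    · exact Nat.card_congr (Equiv.subtypeSubtypeEquivSubtypeInter p (fun x => ¬ q x))
  · rw [nat_card_split (fun y : {x // ¬ p x} => q y.1)]
    congr 1
    · exact Nat.card_congr (Equiv.subtypeSubtypeEquivSubtypeInter (fun x => ¬ p x) q)
    · exact Nat.card_congr
        (Equiv.subtypeSubtypeEquivSubtypeInter (fun x => ¬ p x) (fun x => ¬ q x))

section Bell2

variable {a : ℕ} {s : Finset ℕ}

lemma mem_delPart_of_ne (ha : a ∉ s) {π : Finpartition (insert a s)} {t : Finset ℕ}
    (ht : t ∈ π.parts) (hne : t ≠ π.part a) : t ∈ (delPart ha π).parts :=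
  (mem_delPart ha π).mpr (Or.inl ⟨ht, hne⟩)

lemma mem_addTo_of_ne (ha : a ∉ s) {π : Finpartition s} {t c : Finset ℕ} (hc : c ∈ π.parts)
    (ht : t ∈ π.parts) (hne : t ≠ c) : t ∈ (addTo ha π c hc).parts := by
  rw [addTo_parts ha]
  exact Finset.mem_insert_of_mem (Finset.mem_erase.mpr ⟨hne, ht⟩)

lemma insert_ne_singleton (ha : a ∉ s) {π : Finpartition s} {c : Finset ℕ}
    (hc : c ∈ π.parts) : insert a c ≠ {a} := by
  obtain ⟨x, hx⟩ := π.nonempty_of_mem_parts hc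
  intro h
  have : x ∈ ({a} : Finset ℕ) := h ▸ Finset.mem_insert_of_mem hx
  rw [Finset.mem_singleton] at this
  exact not_mem_of_part ha hc (this ▸ hx)

lemma amem_not_mem_marks (ha : a ∉ s) {π : Finpartition s} {S : Finset (Finset ℕ)}
    (hS : S ⊆ π.parts) {t : Finset ℕ} (hat : a ∈ t) : t ∉ S :=
  fun h => not_mem_of_part ha (hS h) hat

/-- case: `a` is an unmarked singleton -/
def EA (ha : a ∉ s) (k : ℕ) :
    {x : MP (insert a s) k // x.pt.part a = {a} ∧ x.pt.part a ∉ x.mks} ≃ MP s k where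
  toFun x :=
    { pt := delPart ha x.1.pt
      mks := x.1.mks
      sub := fun t ht => mem_delPart_of_ne ha (x.1.sub ht) (fun h => x.2.2 (h ▸ ht))
      cd := x.1.cd }
  invFun y :=
    ⟨{ pt := addSingle ha y.pt
       mks := y.mks
       sub := fun t ht => by
         rw [addSingle_parts ha]
         exact Finset.mem_insert_of_mem (y.sub ht)
       cd := y.cd },
     by
       refine ⟨part_addSingle ha y.pt, ?_⟩
       rw [part_addSingle ha y.pt]
       exact amem_not_mem_marks ha y.sub (Finset.mem_singleton_self a)⟩
  left_inv x := Subtype.ext (MP.ext' (addSingle_delPart ha x.1.pt x.2.1) rfl)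
  right_inv y := MP.ext' (delPart_addSingle ha y.pt) rfl

/-- case: `a` is a marked singleton -/
def EB (ha : a ∉ s) (k : ℕ) :
    {x : MP (insert a s) (k+1) // x.pt.part a = {a} ∧ x.pt.part a ∈ x.mks} ≃ MP s k where
  toFun x :=
    { pt := delPart ha x.1.pt
      mks := x.1.mks.erase (x.1.pt.part a)
      sub := fun t ht => by
        obtain ⟨hne, ht'⟩ := Finset.mem_erase.mp ht
        exact mem_delPart_of_ne ha (x.1.sub ht') hne
      cd := by rw [Finset.card_erase_of_mem x.2.2, x.1.cd]; rfl }
  invFun y :=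
    ⟨{ pt := addSingle ha y.pt
       mks := insert {a} y.mks
       sub := fun t ht => by
         rw [addSingle_parts ha]
         rcases Finset.mem_insert.mp ht with rfl | ht'
         · exact Finset.mem_insert_self _ _
         · exact Finset.mem_insert_of_mem (y.sub ht')
       cd := by
         rw [Finset.card_insert_of_notMem
           (amem_not_mem_marks ha y.sub (Finset.mem_singleton_self a)), y.cd] },
     by
       refine ⟨part_addSingle ha y.pt, ?_⟩
       rw [part_addSingle ha y.pt]
       exact Finset.mem_insert_self _ _⟩
  left_inv := by
    rintro ⟨x, hp, hq⟩
    apply Subtype.ext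
    apply MP.ext' (addSingle_delPart ha x.pt hp)
    show insert {a} (x.mks.erase (x.pt.part a)) = x.mks
    rw [hp] at hq ⊢
    exact Finset.insert_erase hq
  right_inv := by
    intro y
    apply MP.ext' (delPart_addSingle ha y.pt)
    show (insert {a} y.mks).erase ((addSingle ha y.pt).part a) = y.mks
    rw [part_addSingle ha]
    exact Finset.erase_insert (amem_not_mem_marks ha y.sub (Finset.mem_singleton_self a))

/-- case: `a` in a marked non-singleton block -/
def EC (ha : a ∉ s) (k : ℕ) :
    {x : MP (insert a s) k // x.pt.part a ≠ {a} ∧ x.pt.part a ∈ x.mks} ≃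
      Σ y : MP s k, {c // c ∈ y.mks} where
  toFun x :=
    ⟨{ pt := delPart ha x.1.pt
       mks := insert ((x.1.pt.part a).erase a) (x.1.mks.erase (x.1.pt.part a))
       sub := fun t ht => by
         rcases Finset.mem_insert.mp ht with rfl | ht'
         · exact erase_mem_delPart ha x.2.1
         · obtain ⟨hne, ht''⟩ := Finset.mem_erase.mp ht'
           exact mem_delPart_of_ne ha (x.1.sub ht'') hne
       cd := by
         have hnotin : (x.1.pt.part a).erase a ∉ x.1.mks.erase (x.1.pt.part a) := by
           intro h
           exact erase_not_mem_parts ha x.2.1 (x.1.sub (Finset.mem_of_mem_erase h))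
         have hpos : 0 < k := by
           rw [← x.1.cd]
           exact Finset.card_pos.mpr ⟨_, x.2.2⟩
         rw [Finset.card_insert_of_notMem hnotin, Finset.card_erase_of_mem x.2.2, x.1.cd]
         omega },
     ⟨(x.1.pt.part a).erase a, Finset.mem_insert_self _ _⟩⟩
  invFun z :=
    ⟨{ pt := addTo ha z.1.pt z.2.1 (z.1.sub z.2.2)
       mks := insert (insert a z.2.1) (z.1.mks.erase z.2.1)
       sub := fun t ht => by
         rcases Finset.mem_insert.mp ht with rfl | ht'
         · rw [addTo_parts ha]
           exact Finset.mem_insert_self _ _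
         · obtain ⟨hne, ht''⟩ := Finset.mem_erase.mp ht'
           exact mem_addTo_of_ne ha _ (z.1.sub ht'') hne
       cd := by
         have hnotin : insert a z.2.1 ∉ z.1.mks.erase z.2.1 := by
           intro h
           exact amem_not_mem_marks ha z.1.sub (Finset.mem_insert_self a z.2.1)
             (Finset.mem_of_mem_erase h)
         have hpos : 0 < k := by
           rw [← z.1.cd]
           exact Finset.card_pos.mpr ⟨_, z.2.2⟩
         rw [Finset.card_insert_of_notMem hnotin, Finset.card_erase_of_mem z.2.2, z.1.cd]
         omega },
     by
       refine ⟨?_, ?_⟩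
       · rw [part_addTo ha]
         exact insert_ne_singleton ha (z.1.sub z.2.2)
       · rw [part_addTo ha]
         exact Finset.mem_insert_self _ _⟩
  left_inv := by
    rintro ⟨x, hp, hq⟩
    apply Subtype.ext
    have hab : a ∈ x.pt.part a := x.pt.mem_part (Finset.mem_insert_self a s)
    have hnotin : (x.pt.part a).erase a ∉ x.mks.erase (x.pt.part a) := by
      intro h
      exact erase_not_mem_parts ha hp (x.sub (Finset.mem_of_mem_erase h))
    apply MP.ext' (addTo_delPart ha x.pt hp)
    show insert (insert a ((x.pt.part a).erase a))
        ((insert ((x.pt.part a).erase a) (x.mks.erase (x.pt.part a))).erase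
          ((x.pt.part a).erase a)) = x.mks
    rw [Finset.erase_insert hnotin, Finset.insert_erase hab, Finset.insert_erase hq]
  right_inv := by
    rintro ⟨y, c, hc⟩
    have hac : a ∉ c := not_mem_of_part ha (y.sub hc)
    have hpart : (addTo ha y.pt c (y.sub hc)).part a = insert a c := part_addTo ha y.pt c _
    have hnotin : insert a c ∉ y.mks.erase c :=
      fun h => amem_not_mem_marks ha y.sub (Finset.mem_insert_self a c)
        (Finset.mem_of_mem_erase h)
    apply MPP_ext
    · apply MP.ext' (delPart_addTo ha y.pt c (y.sub hc))
      show insert (((addTo ha y.pt c (y.sub hc)).part a).erase a)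
          ((insert (insert a c) (y.mks.erase c)).erase ((addTo ha y.pt c (y.sub hc)).part a))
          = y.mks
      rw [hpart, Finset.erase_insert hac, Finset.erase_insert hnotin, Finset.insert_erase hc]
    · show ((addTo ha y.pt c (y.sub hc)).part a).erase a = c
      rw [hpart, Finset.erase_insert hac]

/-- case: `a` in an unmarked non-singleton block -/
def ED (ha : a ∉ s) (k : ℕ) :
    {x : MP (insert a s) k // x.pt.part a ≠ {a} ∧ x.pt.part a ∉ x.mks} ≃
      Σ y : MP s (k+1), {c // c ∈ y.mks} where
  toFun x :=
    ⟨{ pt := delPart ha x.1.pt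
       mks := insert ((x.1.pt.part a).erase a) x.1.mks
       sub := fun t ht => by
         rcases Finset.mem_insert.mp ht with rfl | ht'
         · exact erase_mem_delPart ha x.2.1
         · exact mem_delPart_of_ne ha (x.1.sub ht') (fun h => x.2.2 (h ▸ ht'))
       cd := by
         have hnotin : (x.1.pt.part a).erase a ∉ x.1.mks := by
           intro h
           exact erase_not_mem_parts ha x.2.1 (x.1.sub h)
         rw [Finset.card_insert_of_notMem hnotin, x.1.cd] },
     ⟨(x.1.pt.part a).erase a, Finset.mem_insert_self _ _⟩⟩
  invFun z :=
    ⟨{ pt := addTo ha z.1.pt z.2.1 (z.1.sub z.2.2)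
       mks := z.1.mks.erase z.2.1
       sub := fun t ht => by
         obtain ⟨hne, ht'⟩ := Finset.mem_erase.mp ht
         exact mem_addTo_of_ne ha _ (z.1.sub ht') hne
       cd := by rw [Finset.card_erase_of_mem z.2.2, z.1.cd]; rfl },
     by
       refine ⟨?_, ?_⟩
       · rw [part_addTo ha]
         exact insert_ne_singleton ha (z.1.sub z.2.2)
       · rw [part_addTo ha]
         exact fun h => amem_not_mem_marks ha z.1.sub (Finset.mem_insert_self a z.2.1)
           (Finset.mem_of_mem_erase h)⟩
  left_inv := by
    rintro ⟨x, hp, hq⟩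
    apply Subtype.ext
    have hnotin : (x.pt.part a).erase a ∉ x.mks := by
      intro h
      exact erase_not_mem_parts ha hp (x.sub h)
    apply MP.ext' (addTo_delPart ha x.pt hp)
    show (insert ((x.pt.part a).erase a) x.mks).erase ((x.pt.part a).erase a) = x.mks
    exact Finset.erase_insert hnotin
  right_inv := by
    rintro ⟨y, c, hc⟩
    have hac : a ∉ c := not_mem_of_part ha (y.sub hc)
    have hpart : (addTo ha y.pt c (y.sub hc)).part a = insert a c := part_addTo ha y.pt c _
    apply MPP_ext
    · apply MP.ext' (delPart_addTo ha y.pt c (y.sub hc))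
      show insert (((addTo ha y.pt c (y.sub hc)).part a).erase a) ((y.mks.erase c)) = y.mks
      rw [hpart, Finset.erase_insert hac, Finset.insert_erase hc]
    · show ((addTo ha y.pt c (y.sub hc)).part a).erase a = c
      rw [hpart, Finset.erase_insert hac]

lemma card_MP_insert (ha : a ∉ s) (k : ℕ) :
    Nat.card (MP (insert a s) k)
      = (k+1) * Nat.card (MP s k) + (k+1) * Nat.card (MP s (k+1))
        + (if k = 0 then 0 else Nat.card (MP s (k-1))) := by
  classical
  rw [nat_card_split4 (fun x : MP (insert a s) k => x.pt.part a = {a})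
    (fun x : MP (insert a s) k => x.pt.part a ∈ x.mks)]
  have hA : Nat.card {x : MP (insert a s) k // x.pt.part a = {a} ∧ x.pt.part a ∉ x.mks}
      = Nat.card (MP s k) := Nat.card_congr (EA ha k)
  have hC : Nat.card {x : MP (insert a s) k // ¬ x.pt.part a = {a} ∧ x.pt.part a ∈ x.mks}
      = k * Nat.card (MP s k) := by
    rw [Nat.card_congr (EC ha k), card_MP_pointed]
  have hD : Nat.card {x : MP (insert a s) k // ¬ x.pt.part a = {a} ∧ x.pt.part a ∉ x.mks}
      = (k+1) * Nat.card (MP s (k+1)) := by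
    rw [Nat.card_congr (ED ha k), card_MP_pointed]
  have hB : Nat.card {x : MP (insert a s) k // x.pt.part a = {a} ∧ x.pt.part a ∈ x.mks}
      = (if k = 0 then 0 else Nat.card (MP s (k-1))) := by
    cases k with
    | zero =>
      rw [if_pos rfl]
      have : IsEmpty {x : MP (insert a s) 0 // x.pt.part a = {a} ∧ x.pt.part a ∈ x.mks} := by
        constructor
        rintro ⟨x, -, hq⟩
        have : x.mks = ∅ := Finset.card_eq_zero.mp x.cd
        rw [this] at hq
        exact Finset.notMem_empty _ hq
      exact Nat.card_of_isEmpty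
    | succ k =>
      rw [if_neg (by omega)]
      have := Nat.card_congr (EB ha k)
      simpa using this
  rw [hA, hB, hC, hD]
  ring

lemma Icc_succ_insert (n : ℕ) : Finset.Icc 1 (n+1) = insert (n+1) (Finset.Icc 1 n) := by
  ext x
  simp only [Finset.mem_Icc, Finset.mem_insert]
  omega

lemma card_MP_Icc (n : ℕ) : ∀ k, Nat.card (MP (Finset.Icc 1 n) k) = tri n k := by
  induction n with
  | zero =>
    intro k
    have hempty : Finset.Icc 1 0 = (∅ : Finset ℕ) := by
      ext x; simp only [Finset.mem_Icc, Finset.notMem_empty, iff_false]; omega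
    rw [hempty]
    have hparts : ∀ π : Finpartition (∅ : Finset ℕ), π.parts = ∅ :=
      fun _ => Finpartition.parts_eq_empty_iff.mpr rfl
    cases k with
    | zero =>
      show Nat.card (MP ∅ 0) = 1
      rw [Nat.card_eq_one_iff_unique]
      constructor
      · constructor
        intro x y
        apply MP.ext'
        · apply Finpartition.ext
          rw [hparts x.pt, hparts y.pt]
        · have hx : x.mks = ∅ := Finset.subset_empty.mp (hparts x.pt ▸ x.sub)
          have hy : y.mks = ∅ := Finset.subset_empty.mp (hparts y.pt ▸ y.sub)
          rw [hx, hy]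
      · exact ⟨⟨Finpartition.empty _, ∅, Finset.empty_subset _, rfl⟩⟩
    | succ k =>
      show Nat.card (MP ∅ (k+1)) = 0
      have : IsEmpty (MP (∅ : Finset ℕ) (k+1)) := by
        constructor
        intro x
        have hx : x.mks = ∅ := Finset.subset_empty.mp (hparts x.pt ▸ x.sub)
        have := x.cd
        rw [hx] at this
        simp at this
      exact Nat.card_of_isEmpty
  | succ n ih =>
    intro k
    have hnot : (n+1) ∉ Finset.Icc 1 n := by simp
    rw [Icc_succ_insert, card_MP_insert hnot, ih k, ih (k+1), tri_succ]
    congr 1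
    split_ifs with h
    · rfl
    · exact ih (k-1)

end Bell2

end VacAux

/-- A vacillating tableau of shape `lam` and length `2n`, encoded as a function
`V : ℕ → YoungDiagram` (constant equal to `lam` from index `2n` on):
`V 0 = ∅`, `V (2n) = lam`, each odd-indexed step deletes a square or does nothing,
and each even-indexed step adds a square or does nothing. -/
def IsVacTab (n : ℕ) (lam : YoungDiagram) (V : ℕ → YoungDiagram) : Prop :=
  V 0 = ⊥ ∧ V (2 * n) = lam ∧ (∀ k, 2 * n ≤ k → V k = lam) ∧
  (∀ i < n, V (2 * i + 1) = V (2 * i) ∨ AddOne (V (2 * i + 1)) (V (2 * i))) ∧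
  (∀ i < n, V (2 * i + 2) = V (2 * i + 1) ∨ AddOne (V (2 * i + 1)) (V (2 * i + 2)))

/-- The number of vacillating tableaux of empty shape and length `2n` equals the
`n`-th Bell number, i.e. the number of set partitions of `[n]`. -/
theorem stmt6 (n : ℕ) :
    Nat.card {V : ℕ → YoungDiagram // IsVacTab n ⊥ V} =
    Nat.card (Finpartition (Finset.Icc 1 n)) := by
  have h1 : Nat.card {V : ℕ → YoungDiagram // IsVacTab n ⊥ V}
      = VacAux.pc (2*n) ⊥ :=
    Nat.card_congr (Equiv.subtypeEquivRight (fun V => VacAux.isVacTab_iff_pref n V))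
  rw [h1, VacAux.pc_final, ← VacAux.card_MP_Icc n 0, VacAux.card_MP_zero]
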